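/- Let n ≥ 1 and let C be the n×n matrix over ℚ with C_{ii} = 2, C_{ij} = −1 when |i−j| = 1, and C_{ij} = 0 otherwise (the Cartan matrix of type Aₙ). Then C is invertible, and for every j ∈ {1,…,n} the minimum over i ∈ {1,…,n} of (C⁻¹)_{ij} + (C⁻¹)_{i,n+1−j} equals 1. Moreover, if j = 1 or j = n this minimum is attained at every i ∈ {1,…,n}, while if 2 ≤ j ≤ n−1 it is attained exactly at i = 1 and i = n. -/
import Mathlib

noncomputable def gA (n : ℕ) (i k : ℤ) : ℚ :=
  ((min i k + 1 : ℤ) : ℚ) * (((n : ℤ) - max i k : ℤ) : ℚ) / ((n : ℚ) + 1)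

lemma gA_tri (n : ℕ) (i k : ℤ) (hi : 0 ≤ i) (hi' : i < n) (hk : 0 ≤ k) (hk' : k < n) :
    2 * gA n i k - gA n (i - 1) k - gA n (i + 1) k = if i = k then 1 else 0 := by
  have hne : ((n : ℚ) + 1) ≠ 0 := by positivity
  unfold gA
  rcases lt_trichotomy i k with h | h | h
  · rw [min_eq_left (by omega), min_eq_left (by omega : i - 1 ≤ k),
      min_eq_left (by omega : i + 1 ≤ k), max_eq_right (by omega : i ≤ k),
      max_eq_right (by omega : i - 1 ≤ k), max_eq_right (by omega : i + 1 ≤ k),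
      if_neg (by omega)]
    push_cast
    field_simp
    ring
  · subst h
    rw [min_self, min_eq_left (by omega : i - 1 ≤ i), min_eq_right (by omega : i ≤ i + 1),
      max_self, max_eq_right (by omega : i - 1 ≤ i), max_eq_left (by omega : i ≤ i + 1),
      if_pos rfl]
    push_cast
    field_simp
    ring
  · rw [min_eq_right (by omega : k ≤ i), min_eq_right (by omega : k ≤ i - 1),
      min_eq_right (by omega : k ≤ i + 1), max_eq_left (by omega : k ≤ i),
      max_eq_left (by omega : k ≤ i - 1), max_eq_left (by omega : k ≤ i + 1),
      if_neg (by omega)]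
    push_cast
    field_simp
    ring

lemma gA_left (n : ℕ) (k : ℤ) (hk : 0 ≤ k) : gA n (-1) k = 0 := by
  unfold gA
  rw [min_eq_left (by omega)]
  norm_num

lemma gA_right (n : ℕ) (k : ℤ) (hk : k ≤ n) : gA n n k = 0 := by
  unfold gA
  rw [max_eq_left hk]
  norm_num

lemma gA_sum (n : ℕ) (i j : ℤ) (hj : 0 ≤ j) (hj' : j < n) :
    gA n i j + gA n i ((n : ℤ) - 1 - j) =
      ((min (min (i + 1) ((n : ℤ) - i)) (min (j + 1) ((n : ℤ) - j)) : ℤ) : ℚ) := by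
  have hne : ((n : ℚ) + 1) ≠ 0 := by positivity
  unfold gA
  rcases le_or_gt i j with h1 | h1 <;> rcases le_or_gt i ((n : ℤ) - 1 - j) with h2 | h2
  · rw [min_eq_left h1, max_eq_right h1, min_eq_left h2, max_eq_right h2,
      (by omega : min (min (i + 1) ((n : ℤ) - i)) (min (j + 1) ((n : ℤ) - j)) = i + 1)]
    push_cast; field_simp; ring
  · rw [min_eq_left h1, max_eq_right h1, min_eq_right (by omega : (n : ℤ) - 1 - j ≤ i),
      max_eq_left (by omega : (n : ℤ) - 1 - j ≤ i),
      (by omega : min (min (i + 1) ((n : ℤ) - i)) (min (j + 1) ((n : ℤ) - j)) = (n : ℤ) - j)]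
    push_cast; field_simp; ring
  · rw [min_eq_right (by omega : j ≤ i), max_eq_left (by omega : j ≤ i), min_eq_left h2,
      max_eq_right h2,
      (by omega : min (min (i + 1) ((n : ℤ) - i)) (min (j + 1) ((n : ℤ) - j)) = j + 1)]
    push_cast; field_simp; ring
  · rw [min_eq_right (by omega : j ≤ i), max_eq_left (by omega : j ≤ i),
      min_eq_right (by omega : (n : ℤ) - 1 - j ≤ i), max_eq_left (by omega : (n : ℤ) - 1 - j ≤ i),
      (by omega : min (min (i + 1) ((n : ℤ) - i)) (min (j + 1) ((n : ℤ) - j)) = (n : ℤ) - i)]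
    push_cast; field_simp; ring



/-- Type Aₙ row of the minimal bandwidth theorem: `C` is the Cartan matrix of type Aₙ
(0-based indexing: Lean index `i : Fin n` corresponds to the math index `i+1`),
`C⁻¹ i j` is the coefficient of `α_{i+1}` in the fundamental weight `ω_{j+1}`, and
`Fin.rev j` corresponds to the math index `n+1-(j+1)`. -/
theorem stmt_0 (n : ℕ) (hn : 1 ≤ n) (C : Matrix (Fin n) (Fin n) ℚ)
    (hC : ∀ i j : Fin n, C i j =
      if i = j then 2 else if ((i : ℤ) - (j : ℤ)).natAbs = 1 then -1 else 0) :
    IsUnit C ∧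
    ∀ j : Fin n,
      ((∀ i : Fin n, 1 ≤ C⁻¹ i j + C⁻¹ i j.rev) ∧
        (∃ i : Fin n, C⁻¹ i j + C⁻¹ i j.rev = 1)) ∧
      (((j : ℕ) = 0 ∨ (j : ℕ) = n - 1) →
        ∀ i : Fin n, C⁻¹ i j + C⁻¹ i j.rev = 1) ∧
      ((1 ≤ (j : ℕ) ∧ (j : ℕ) ≤ n - 2) →
        ∀ i : Fin n, (C⁻¹ i j + C⁻¹ i j.rev = 1 ↔ (i : ℕ) = 0 ∨ (i : ℕ) = n - 1)) := by
  have hC' : ∀ i j : Fin n, C i j =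
      (if (j : ℤ) = (i : ℤ) then 2 else 0) + (if (j : ℤ) = (i : ℤ) - 1 then -1 else 0) +
        (if (j : ℤ) = (i : ℤ) + 1 then -1 else 0) := by
    intro i j
    rw [hC]
    simp only [Fin.ext_iff]
    split_ifs <;> first | omega | norm_num
  have hCB : C * (Matrix.of fun i k : Fin n => gA n (i : ℤ) (k : ℤ)) = 1 := by
    ext i k
    have hi := i.isLt
    have hk := k.isLt
    have key : ∀ (m : ℤ) (c : ℚ), 0 ≤ m + 1 → m ≤ n →
        (∑ j : Fin n, if (j : ℤ) = m then c * gA n (j : ℤ) (k : ℤ) else 0)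
          = c * gA n m (k : ℤ) := by
      intro m c hm0 hmn
      by_cases hmr : 0 ≤ m ∧ m < n
      · obtain ⟨j₀, hj₀⟩ : ∃ j₀ : Fin n, (j₀ : ℤ) = m :=
          ⟨⟨m.toNat, by omega⟩, by simp; omega⟩
        have hs : (∑ j : Fin n, if (j : ℤ) = m then c * gA n (j : ℤ) (k : ℤ) else 0)
            = if (j₀ : ℤ) = m then c * gA n (j₀ : ℤ) (k : ℤ) else 0 := by
          refine Finset.sum_eq_single_of_mem j₀ (Finset.mem_univ _) ?_
          intro b _ hb
          rw [if_neg]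
          intro h
          exact hb (Fin.ext (by omega))
        rw [hs, if_pos hj₀, hj₀]
      · have hz : gA n m (k : ℤ) = 0 := by
          rcases (by omega : m = -1 ∨ m = (n : ℤ)) with rfl | rfl
          · exact gA_left n k (by omega)
          · exact gA_right n k (by omega)
        rw [hz, mul_zero]
        apply Finset.sum_eq_zero
        intro j _
        have := j.isLt
        rw [if_neg (by omega)]
    rw [Matrix.mul_apply]
    simp only [hC', add_mul, ite_mul, zero_mul, Matrix.of_apply, Finset.sum_add_distrib]
    rw [key (i : ℤ) 2 (by omega) (by omega), key ((i : ℤ) - 1) (-1) (by omega) (by omega),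
      key ((i : ℤ) + 1) (-1) (by omega) (by omega), Matrix.one_apply]
    have tri := gA_tri n (i : ℤ) (k : ℤ) (by omega) (by omega) (by omega) (by omega)
    by_cases hik : i = k
    · subst hik
      rw [if_pos rfl]
      rw [if_pos rfl] at tri
      linarith [tri]
    · rw [if_neg hik]
      rw [if_neg (by simp only [Fin.ext_iff] at hik; omega)] at tri
      linarith [tri]
  have hBC := mul_eq_one_comm.mp hCB
  have hU : IsUnit C := ⟨⟨C, _, hCB, hBC⟩, rfl⟩
  have hinv : C⁻¹ = Matrix.of fun i k : Fin n => gA n (i : ℤ) (k : ℤ) :=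
    Matrix.inv_eq_right_inv hCB
  refine ⟨hU, fun j => ?_⟩
  have hj := j.isLt
  have hsum : ∀ i : Fin n, C⁻¹ i j + C⁻¹ i j.rev =
      ((min (min ((i : ℤ) + 1) ((n : ℤ) - i)) (min ((j : ℤ) + 1) ((n : ℤ) - j)) : ℤ) : ℚ) := by
    intro i
    rw [hinv]
    simp only [Matrix.of_apply]
    have hrev : ((j.rev : ℕ) : ℤ) = (n : ℤ) - 1 - (j : ℤ) := by
      rw [Fin.val_rev]; omega
    rw [hrev]
    exact gA_sum n (i : ℤ) (j : ℤ) (by omega) (by omega)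
  refine ⟨⟨fun i => ?_, ⟨⟨0, hn⟩, ?_⟩⟩, fun hj0 i => ?_, fun hj12 i => ?_⟩
  · rw [hsum i]
    have hi := i.isLt
    exact_mod_cast (by omega :
      (1 : ℤ) ≤ min (min ((i : ℤ) + 1) ((n : ℤ) - i)) (min ((j : ℤ) + 1) ((n : ℤ) - j)))
  · rw [hsum ⟨0, hn⟩]
    have h0 : (((⟨0, hn⟩ : Fin n) : ℕ) : ℤ) = 0 := rfl
    rw [h0]
    have : min (min ((0 : ℤ) + 1) ((n : ℤ) - 0)) (min ((j : ℤ) + 1) ((n : ℤ) - j)) = 1 := by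
      omega
    rw [this]; norm_num
  · rw [hsum i]
    have hi := i.isLt
    have : min (min ((i : ℤ) + 1) ((n : ℤ) - i)) (min ((j : ℤ) + 1) ((n : ℤ) - j)) = 1 := by
      omega
    rw [this]; norm_num
  · rw [hsum i]
    have hi := i.isLt
    rw [show (((min (min ((i : ℤ) + 1) ((n : ℤ) - i)) (min ((j : ℤ) + 1) ((n : ℤ) - j)) : ℤ) : ℚ)
        = 1) ↔ min (min ((i : ℤ) + 1) ((n : ℤ) - i)) (min ((j : ℤ) + 1) ((n : ℤ) - j)) = 1
      from Int.cast_eq_one]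
    obtain ⟨hj1, hj2⟩ := hj12
    omega
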